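/- In the CP-ABE access tree, if each non-root node x satisfies l_x(0) = l_{parent(x)}(index(x)) where each l_y is a polynomial over ZMod p assigned to node y, and the root polynomial satisfies l_R(0) = s, then for any node x whose children's values D_y = e(g,g)^{r·l_x(index(y))} are known for a set of children Y_x of size equal to the threshold (degree of l_x plus 1), the Lagrange-weighted product Π_{y∈Y_x} D_y^{Δ} equals e(g,g)^{r·l_x(0)}. Applying this recursively from leaves to root yields e(g,g)^{rs}. -/

import Mathlib

lemma pow_mod_p {p : ℕ} {GT : Type*} [CommGroup GT] {t : GT}
    (htp : t ^ p = 1) (n : ℕ) : t ^ (n % p) = t ^ n := by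
  conv_rhs => rw [← Nat.div_add_mod n p, pow_add, pow_mul, htp, one_pow, one_mul]

lemma zmod_pow_mul {p : ℕ} [NeZero p] {GT : Type*} [CommGroup GT] {t : GT}
    (htp : t ^ p = 1) (a b : ZMod p) : (t ^ a.val) ^ b.val = t ^ (a * b).val := by
  rw [← pow_mul, ZMod.val_mul, pow_mod_p htp]

lemma zmod_prod_pow {p : ℕ} [NeZero p] {GT : Type*} [CommGroup GT] {t : GT}
    (htp : t ^ p = 1) {ι : Type*} (S : Finset ι) (c : ι → ZMod p) :
    (∏ k ∈ S, t ^ (c k).val) = t ^ (∑ k ∈ S, c k).val := by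
  classical
  induction S using Finset.induction_on with
  | empty => simp [ZMod.val_zero]
  | insert _ _ h ih =>
    rw [Finset.prod_insert h, Finset.sum_insert h, ih, ← pow_add, ZMod.val_add, pow_mod_p htp]

theorem cpabe_tree_recombination (p : ℕ) [Fact p.Prime] (GT : Type*) [CommGroup GT]
    (hcard : Nat.card GT = p) (t : GT) (q : ℕ)
    (l : Polynomial (ZMod p)) (hdeg : l.degree < q)
    (Y' : Finset (ZMod p)) (hY : Y'.card = q) (h0 : (0 : ZMod p) ∉ Y')
    (r s : ZMod p) (hroot : l.eval 0 = s) :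
    (∏ k ∈ Y', (t ^ (r * l.eval k).val) ^ ((∏ j ∈ Y'.erase k, (0 - j) / (k - j)).val))
      = t ^ (r * l.eval 0).val ∧
    (∏ k ∈ Y', (t ^ (r * l.eval k).val) ^ ((∏ j ∈ Y'.erase k, (0 - j) / (k - j)).val))
      = t ^ (r * s).val := by
  have hfin : Finite GT := Nat.finite_of_card_ne_zero (by
    rw [hcard]; exact (Fact.out : p.Prime).pos.ne')
  have htp : t ^ p = 1 := by rw [← hcard]; exact pow_card_eq_one'
  -- Lagrange interpolation identity
  have hinj : Set.InjOn (id : ZMod p → ZMod p) Y' := Function.injective_id.injOn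
  have hlag : l.eval 0 = ∑ k ∈ Y', l.eval k * ∏ j ∈ Y'.erase k, (0 - j) / (k - j) := by
    have h := Lagrange.eq_interpolate (f := l) hinj (by rwa [hY])
    conv_lhs => rw [h]
    rw [Lagrange.interpolate_apply, Polynomial.eval_finset_sum]
    refine Finset.sum_congr rfl fun k hk => ?_
    rw [Polynomial.eval_mul, Polynomial.eval_C, Lagrange.basis, Polynomial.eval_prod]
    congr 1
    refine Finset.prod_congr rfl fun j hj => ?_
    rw [Lagrange.basisDivisor, Polynomial.eval_mul, Polynomial.eval_C, Polynomial.eval_sub,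
      Polynomial.eval_X, Polynomial.eval_C]
    simp only [id_eq]
    rw [div_eq_mul_inv, mul_comm]
  have key : (∏ k ∈ Y', (t ^ (r * l.eval k).val) ^
      ((∏ j ∈ Y'.erase k, (0 - j) / (k - j)).val)) = t ^ (r * l.eval 0).val := by
    calc (∏ k ∈ Y', (t ^ (r * l.eval k).val) ^
          ((∏ j ∈ Y'.erase k, (0 - j) / (k - j)).val))
        = ∏ k ∈ Y', t ^ ((r * l.eval k) * ∏ j ∈ Y'.erase k, (0 - j) / (k - j)).val := by
          exact Finset.prod_congr rfl fun k _ => zmod_pow_mul htp _ _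
      _ = t ^ (∑ k ∈ Y', (r * l.eval k) * ∏ j ∈ Y'.erase k, (0 - j) / (k - j)).val :=
          zmod_prod_pow htp _ _
      _ = t ^ (r * l.eval 0).val := by
          congr 2
          rw [hlag, Finset.mul_sum]
          exact Finset.sum_congr rfl fun k _ => by ring
  exact ⟨key, by rw [key, hroot]⟩
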